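/- arXiv:1409.5327 — 3 statements merged into one kernel-verified Lean document; each statement's English description precedes it below -/
import Mathlib

section
/- The series ∑_{Q ∈ ℕ^J} Φ(Q) · ∏_{j ∈ J} a_j^{Q_j} converges and equals ∏_{l ∈ L} (1 − a_l)^{-1}. -/
open scoped BigOperators Classical

/-- The Store-Forward normalizing constant `Φ(Q)`: the (finite) sum over arrays
`m = (m l j : l ∈ L, j ∈ J)` of nonnegative integers satisfying `m l j = 0` whenever
`A l j = 0` and `∑ l, m l j = Q j` for every `j`, of
`∏ l, [(m_l)! / ∏ j (m l j)!] * ∏ j (A l j)^(m l j)`, where `m_l = ∑ j, m l j`. -/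
noncomputable def Phi {J L : Type*} [Fintype J] [Fintype L]
    (A : L → J → ℝ) (Q : J → ℕ) : ℝ :=
  ∑' m : L → J → ℕ,
    if (∀ l j, A l j = 0 → m l j = 0) ∧ (∀ j, ∑ l, m l j = Q j) then
      ∏ l, (((∑ j, m l j).factorial : ℝ) / ∏ j, ((m l j).factorial : ℝ)) *
        ∏ j, A l j ^ m l j
    else 0

section Aux
open Finset
open scoped ENNReal

private lemma tsum_pi_prod_fin {γ : Type*} :
    ∀ (n : ℕ) (f : Fin n → γ → ℝ≥0∞),
      ∑' m : Fin n → γ, ∏ i, f i (m i) = ∏ i, ∑' x, f i x := by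
  intro n
  induction n with
  | zero =>
    intro f
    simp only [Finset.univ_eq_empty, Finset.prod_empty]
    exact tsum_eq_single (fun i => i.elim0) (fun b hb => absurd (Subsingleton.elim _ _) hb)
  | succ n ih =>
    intro f
    let e := Fin.consEquiv (fun _ : Fin (n+1) => γ)
    rw [← Equiv.tsum_eq e (fun m => ∏ i, f i (m i))]
    have h1 : ∀ p : γ × (Fin n → γ), (∏ i, f i (e p i))
        = f 0 p.1 * ∏ i : Fin n, f i.succ (p.2 i) := by
      intro p
      rw [Fin.prod_univ_succ]
      simp [e, Fin.consEquiv_apply]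
    calc ∑' p : γ × (Fin n → γ), ∏ i, f i (e p i)
        = ∑' (x : γ) (m : Fin n → γ), f 0 x * ∏ i : Fin n, f i.succ (m i) := by
          rw [← ENNReal.tsum_prod]; exact tsum_congr h1
      _ = (∑' x, f 0 x) * ∏ i : Fin n, ∑' x, f i.succ x := by
          simp_rw [ENNReal.tsum_mul_left, ih fun i => f i.succ, ENNReal.tsum_mul_right]
      _ = ∏ i, ∑' x, f i x := (Fin.prod_univ_succ fun i => ∑' x, f i x).symm

private lemma tsum_pi_prod {ι γ : Type*} [Fintype ι] (f : ι → γ → ℝ≥0∞) :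
    ∑' m : ι → γ, ∏ i, f i (m i) = ∏ i, ∑' x, f i x := by
  classical
  let e := Fintype.equivFin ι
  let d : (Fin (Fintype.card ι) → γ) ≃ (ι → γ) := Equiv.arrowCongr e.symm (Equiv.refl γ)
  rw [← Equiv.tsum_eq d (fun m => ∏ i, f i (m i))]
  have h1 : ∀ m : Fin (Fintype.card ι) → γ,
      (∏ i, f i (d m i)) = ∏ k, f (e.symm k) (m k) := by
    intro m
    exact Fintype.prod_equiv e _ _ (fun i => by simp [d, Equiv.arrowCongr])
  rw [tsum_congr h1, tsum_pi_prod_fin _ (fun k => f (e.symm k))]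
  exact (Fintype.prod_equiv e _ _ (fun i => by simp)).symm

private lemma tsum_hfun {J : Type*} [Fintype J] (x : J → ℝ≥0∞) :
    ∑' n : J → ℕ, ((Nat.multinomial Finset.univ n : ℝ≥0∞) * ∏ j, x j ^ n j)
      = (1 - ∑ j, x j)⁻¹ := by
  classical
  set h : (J → ℕ) → ℝ≥0∞ := fun n => (Nat.multinomial Finset.univ n : ℝ≥0∞) * ∏ j, x j ^ n j
  calc ∑' n, h n = ∑' (n : J → ℕ) (k : ℕ), if ∑ j, n j = k then h n else 0 := by
        refine tsum_congr fun n => ?_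
        rw [tsum_eq_single (∑ j, n j) (fun k hk => if_neg fun hc => hk hc.symm)]
        exact (if_pos rfl).symm
    _ = ∑' (k : ℕ) (n : J → ℕ), if ∑ j, n j = k then h n else 0 := ENNReal.tsum_comm
    _ = ∑' k : ℕ, (∑ j, x j) ^ k := by
        refine tsum_congr fun k => ?_
        rw [tsum_eq_sum (s := Finset.piAntidiag Finset.univ k)
          (fun n hn => if_neg fun hc => hn (by simp [Finset.mem_piAntidiag, hc]))]
        rw [Finset.sum_pow_eq_sum_piAntidiag]
        refine Finset.sum_congr rfl fun n hn => ?_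
        rw [if_pos (by simpa [Finset.mem_piAntidiag] using (Finset.mem_piAntidiag.1 hn).1)]
    _ = (1 - ∑ j, x j)⁻¹ := ENNReal.tsum_geometric _

end Aux
open Finset in
open scoped ENNReal in
/-- the series `∑_{Q ∈ ℕ^J} Φ(Q) ∏_j a_j^(Q j)` converges and equals
`∏_l (1 - a_l)⁻¹`. -/
theorem storeForward_normalizing_series
    {J L R : Type*} [Fintype J] [Nonempty J] [Fintype L] [Nonempty L] [Fintype R]
    (A : L → J → ℝ) (hA : ∀ l j, 0 ≤ A l j)
    (route : R → List J) (hnodup : ∀ r, (route r).Nodup)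
    (a : R → ℝ) (ha : ∀ r, 0 < a r)
    (aJ : J → ℝ) (haJ : ∀ j, aJ j = ∑ r : R, if j ∈ route r then a r else 0)
    (aL : L → ℝ) (haL : ∀ l, aL l = ∑ j, A l j * aJ j)
    (hsub : ∀ l, aL l < 1) :
    HasSum (fun Q : J → ℕ => Phi A Q * ∏ j, aJ j ^ Q j) (∏ l, (1 - aL l)⁻¹) := by
  have haJ0 : ∀ j, 0 ≤ aJ j := fun j => by
    rw [haJ]
    exact Finset.sum_nonneg fun r _ => by split <;> [exact (ha r).le; rfl]
  have haL0 : ∀ l, 0 ≤ aL l := fun l => by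
    rw [haL]
    exact Finset.sum_nonneg fun j _ => mul_nonneg (hA l j) (haJ0 j)
  -- the real-valued summand of `Phi`
  set T : (L → J → ℕ) → ℝ := fun m =>
    ∏ l, (((∑ j, m l j).factorial : ℝ) / ∏ j, ((m l j).factorial : ℝ)) *
      ∏ j, A l j ^ m l j with hT
  set φ : (J → ℕ) → (L → J → ℕ) → ℝ := fun Q m =>
    if (∀ l j, A l j = 0 → m l j = 0) ∧ (∀ j, ∑ l, m l j = Q j) then T m else 0 with hφ
  have hPhi : ∀ Q, Phi A Q = ∑' m, φ Q m := fun Q => rfl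
  have hTnn : ∀ m, 0 ≤ T m := fun m =>
    Finset.prod_nonneg fun l _ => mul_nonneg
      (div_nonneg (by positivity) (Finset.prod_nonneg fun j _ => by positivity))
      (Finset.prod_nonneg fun j _ => pow_nonneg (hA l j) _)
  have hφnn : ∀ Q m, 0 ≤ φ Q m := fun Q m => by
    rw [hφ]; dsimp only; split
    · exact hTnn m
    · rfl
  have hφsupp : ∀ Q : J → ℕ, ∀ m ∉ Fintype.piFinset
      (fun _ : L => Fintype.piFinset fun j => Finset.range (Q j + 1)), φ Q m = 0 := by
    intro Q m hm
    rw [hφ]; dsimp only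
    refine if_neg fun hc => hm ?_
    simp only [Fintype.mem_piFinset, Finset.mem_range]
    intro l j
    have h1 : m l j ≤ ∑ l', m l' j :=
      Finset.single_le_sum (f := fun l' => m l' j) (fun _ _ => Nat.zero_le _) (Finset.mem_univ l)
    have h2 := hc.2 j
    omega
  have hφsum : ∀ Q, Summable (φ Q) := fun Q =>
    summable_of_ne_finset_zero (hφsupp Q)
  have hPhinn : ∀ Q, 0 ≤ Phi A Q := fun Q => by
    rw [hPhi]; exact tsum_nonneg (hφnn Q)
  -- the multinomial coefficient identity
  have hmult : ∀ n : J → ℕ,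
      ((∑ j, n j).factorial : ℝ) / ∏ j, ((n j).factorial : ℝ)
        = (Nat.multinomial Finset.univ n : ℝ) := by
    intro n
    have h := Nat.multinomial_spec (s := Finset.univ) (f := n)
    have hne : (∏ j, ((n j).factorial : ℝ)) ≠ 0 := by positivity
    rw [div_eq_iff hne]
    exact_mod_cast (h.symm.trans (mul_comm _ _))
  -- ENNReal atoms
  set b : L → J → ℝ≥0∞ := fun l j => ENNReal.ofReal (A l j * aJ j) with hb
  have hbsum : ∀ l, ∑ j, b l j = ENNReal.ofReal (aL l) := fun l => by
    rw [haL, ENNReal.ofReal_sum_of_nonneg fun j _ => mul_nonneg (hA l j) (haJ0 j)]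
  have haLlt : ∀ l, ENNReal.ofReal (aL l) < 1 := fun l =>
    ENNReal.ofReal_lt_one.2 (hsub l)
  set hterm : L → (J → ℕ) → ℝ≥0∞ := fun l n =>
    (Nat.multinomial Finset.univ n : ℝ≥0∞) * ∏ j, b l j ^ n j with hhterm
  -- Step 1: express `ofReal (F Q)` as a tsum over `m`
  have step1 : ∀ Q : J → ℕ, ENNReal.ofReal (Phi A Q * ∏ j, aJ j ^ Q j)
      = ∑' m : L → J → ℕ, ENNReal.ofReal (φ Q m) * ∏ j, ENNReal.ofReal (aJ j) ^ Q j := by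
    intro Q
    rw [ENNReal.ofReal_mul (hPhinn Q), hPhi Q,
      ENNReal.ofReal_tsum_of_nonneg (hφnn Q) (hφsum Q),
      ENNReal.ofReal_prod_of_nonneg fun j _ => pow_nonneg (haJ0 j) _]
    simp_rw [ENNReal.ofReal_pow (haJ0 _)]
    rw [ENNReal.tsum_mul_right]
  -- Step 2: for fixed m, sum over Q
  have step2 : ∀ m : L → J → ℕ,
      (∑' Q : J → ℕ, ENNReal.ofReal (φ Q m) * ∏ j, ENNReal.ofReal (aJ j) ^ Q j)
        = ∏ l, hterm l (m l) := by
    intro m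
    by_cases hsup : ∀ l j, A l j = 0 → m l j = 0
    · have hQeq : ∀ Q : J → ℕ,
          ENNReal.ofReal (φ Q m) * ∏ j, ENNReal.ofReal (aJ j) ^ Q j
            = if Q = (fun j => ∑ l, m l j) then
                ENNReal.ofReal (T m) * ∏ j, ENNReal.ofReal (aJ j) ^ Q j else 0 := by
        intro Q
        by_cases hq : Q = fun j => ∑ l, m l j
        · rw [if_pos hq, hφ]; dsimp only
          rw [if_pos ⟨hsup, fun j => (congrFun hq j).symm⟩]
        · rw [if_neg hq, hφ]; dsimp only
          rw [if_neg, ENNReal.ofReal_zero, zero_mul]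
          rintro ⟨-, h2⟩
          exact hq (funext fun j => (h2 j).symm)
      rw [tsum_congr hQeq, tsum_eq_single (fun j => ∑ l, m l j) (fun Q hQ => if_neg hQ),
        if_pos rfl]
      -- now prove the closed form
      have hofT : ENNReal.ofReal (T m)
          = ∏ l, ((Nat.multinomial Finset.univ (m l) : ℝ≥0∞) *
              ∏ j, ENNReal.ofReal (A l j) ^ m l j) := by
        rw [hT]; dsimp only
        rw [ENNReal.ofReal_prod_of_nonneg fun l _ => mul_nonneg
          (div_nonneg (by positivity) (Finset.prod_nonneg fun j _ => by positivity))
          (Finset.prod_nonneg fun j _ => pow_nonneg (hA l j) _)]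
        refine Finset.prod_congr rfl fun l _ => ?_
        rw [ENNReal.ofReal_mul (div_nonneg (by positivity)
            (Finset.prod_nonneg fun j _ => by positivity)),
          hmult (m l), ENNReal.ofReal_natCast,
          ENNReal.ofReal_prod_of_nonneg fun j _ => pow_nonneg (hA l j) _]
        simp_rw [ENNReal.ofReal_pow (hA l _)]
      rw [hofT]
      have hpow : (∏ j, ENNReal.ofReal (aJ j) ^ (∑ l, m l j))
          = ∏ l, ∏ j, ENNReal.ofReal (aJ j) ^ m l j := by
        rw [Finset.prod_comm]
        exact Finset.prod_congr rfl fun j _ =>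
          (Finset.prod_pow_eq_pow_sum Finset.univ (fun l => m l j) _).symm
      rw [hpow, ← Finset.prod_mul_distrib]
      refine Finset.prod_congr rfl fun l _ => ?_
      rw [hhterm]; dsimp only
      rw [mul_assoc, ← Finset.prod_mul_distrib]
      congr 1
      refine Finset.prod_congr rfl fun j _ => ?_
      rw [hb]; dsimp only
      rw [ENNReal.ofReal_mul (hA l j), mul_pow]
    · -- support condition fails: both sides vanish
      push_neg at hsup
      obtain ⟨l0, j0, hA0, hm0⟩ := hsup
      have hz : ∀ Q : J → ℕ,
          ENNReal.ofReal (φ Q m) * ∏ j, ENNReal.ofReal (aJ j) ^ Q j = 0 := by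
        intro Q
        rw [hφ]; dsimp only
        rw [if_neg, ENNReal.ofReal_zero, zero_mul]
        rintro ⟨h1, -⟩
        exact hm0 (h1 l0 j0 hA0)
      rw [tsum_congr hz, tsum_zero]
      refine (Finset.prod_eq_zero (Finset.mem_univ l0) ?_).symm
      rw [hhterm]; dsimp only
      rw [Finset.prod_eq_zero (Finset.mem_univ j0), mul_zero]
      rw [hb]; dsimp only
      rw [hA0, zero_mul, ENNReal.ofReal_zero, zero_pow hm0]
  -- the key ENNReal identity
  have key : (∑' Q : J → ℕ, ENNReal.ofReal (Phi A Q * ∏ j, aJ j ^ Q j))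
      = ∏ l, (1 - ENNReal.ofReal (aL l))⁻¹ := by
    calc (∑' Q : J → ℕ, ENNReal.ofReal (Phi A Q * ∏ j, aJ j ^ Q j))
        = ∑' (Q : J → ℕ) (m : L → J → ℕ),
            ENNReal.ofReal (φ Q m) * ∏ j, ENNReal.ofReal (aJ j) ^ Q j := tsum_congr step1
      _ = ∑' (m : L → J → ℕ) (Q : J → ℕ),
            ENNReal.ofReal (φ Q m) * ∏ j, ENNReal.ofReal (aJ j) ^ Q j := ENNReal.tsum_comm
      _ = ∑' m : L → J → ℕ, ∏ l, hterm l (m l) := tsum_congr step2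
      _ = ∏ l, ∑' n : J → ℕ, hterm l n := tsum_pi_prod hterm
      _ = ∏ l, (1 - ENNReal.ofReal (aL l))⁻¹ := by
          refine Finset.prod_congr rfl fun l _ => ?_
          rw [hhterm]; dsimp only
          rw [tsum_hfun (fun j => b l j), hbsum l]
  -- pass back to the reals
  have hne : ∀ l ∈ Finset.univ (α := L), (1 - ENNReal.ofReal (aL l))⁻¹ ≠ ⊤ := by
    intro l _
    rw [Ne, ENNReal.inv_eq_top]
    exact (tsub_pos_of_lt (haLlt l)).ne'
  have hprodne : (∏ l, (1 - ENNReal.ofReal (aL l))⁻¹) ≠ ⊤ := ENNReal.prod_ne_top hne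
  have hFnn : ∀ Q : J → ℕ, 0 ≤ Phi A Q * ∏ j, aJ j ^ Q j := fun Q =>
    mul_nonneg (hPhinn Q) (Finset.prod_nonneg fun j _ => pow_nonneg (haJ0 j) _)
  have hsummable : Summable (fun Q : J → ℕ => Phi A Q * ∏ j, aJ j ^ Q j) := by
    have h := ENNReal.summable_toReal (key ▸ hprodne)
    exact h.congr fun Q => ENNReal.toReal_ofReal (hFnn Q)
  have hprod_eq : ∏ l, (1 - ENNReal.ofReal (aL l))⁻¹
      = ENNReal.ofReal (∏ l, (1 - aL l)⁻¹) := by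
    rw [ENNReal.ofReal_prod_of_nonneg fun l _ => inv_nonneg.2 (sub_nonneg.2 (hsub l).le)]
    refine Finset.prod_congr rfl fun l _ => ?_
    rw [ENNReal.ofReal_inv_of_pos (sub_pos.2 (hsub l)), ENNReal.ofReal_sub 1 (haL0 l),
      ENNReal.ofReal_one]
  have htsum : (∑' Q : J → ℕ, Phi A Q * ∏ j, aJ j ^ Q j) = ∏ l, (1 - aL l)⁻¹ := by
    have h2 := ENNReal.tsum_toReal_eq
      (f := fun Q : J → ℕ => ENNReal.ofReal (Phi A Q * ∏ j, aJ j ^ Q j))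
      (fun Q => ENNReal.ofReal_ne_top)
    rw [key, hprod_eq, ENNReal.toReal_ofReal
      (Finset.prod_nonneg fun l _ => inv_nonneg.2 (sub_nonneg.2 (hsub l).le))] at h2
    rw [h2]
    exact tsum_congr fun Q => (ENNReal.toReal_ofReal (hFnn Q)).symm
  exact (Summable.hasSum_iff hsummable).2 htsum
end

section
/- Proposition 1 (product-form representation of the stationary queue lengths): the pushforward of the product measure μ under the map T is the probability mass function Q ↦ ∏_{l ∈ L}(1 − a_l) · Φ(Q) · ∏_{j ∈ J} a_j^{Q_j} on ℕ^J; that is, for every Q ∈ ℕ^J, μ({m : T(m) = Q}) = ∏_{l ∈ L}(1 − a_l) · Φ(Q) · ∏_{j ∈ J} a_j^{Q_j}. -/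
open scoped BigOperators Classical

/-- The probability mass function `p_l` of the context (extended by zero off its support):
`p_l(k) = (1 - a_l) * (|k|)! / ∏_j (k j)! * ∏_j (A l j * a_j)^(k j)` where `|k| = ∑ j, k j`. -/
noncomputable def pl {J : Type*} [Fintype J] (Al : J → ℝ) (aJ : J → ℝ) (al : ℝ)
    (k : J → ℕ) : ℝ :=
  (1 - al) * (((∑ j, k j).factorial : ℝ) / ∏ j, ((k j).factorial : ℝ)) *
    ∏ j, (Al j * aJ j) ^ k j

/-- Proposition 1, product-form representation of stationary queue lengths:
the pushforward of the product measure `μ = ⊗_l p_l` under `T(m) = (∑ l, m l j)_j` is the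
pmf `Q ↦ ∏_l (1 - a_l) * Φ(Q) * ∏_j a_j^(Q j)`; that is, for every `Q`,
`μ({m : T(m) = Q}) = ∏_l (1 - a_l) * Φ(Q) * ∏_j a_j^(Q j)`.
Here `μ(m) = ∏ l, p_l (m l)`. -/
theorem product_form_representation
    {J L R : Type*} [Fintype J] [Nonempty J] [Fintype L] [Nonempty L] [Fintype R]
    (A : L → J → ℝ) (hA : ∀ l j, 0 ≤ A l j)
    (route : R → List J) (hnodup : ∀ r, (route r).Nodup)
    (a : R → ℝ) (ha : ∀ r, 0 < a r)
    (aJ : J → ℝ) (haJ : ∀ j, aJ j = ∑ r : R, if j ∈ route r then a r else 0)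
    (aL : L → ℝ) (haL : ∀ l, aL l = ∑ j, A l j * aJ j)
    (hsub : ∀ l, aL l < 1)
    (Q : J → ℕ) :
    HasSum
      (fun m : {m : L → J → ℕ // ∀ j, ∑ l, m l j = Q j} =>
        ∏ l, pl (A l) aJ (aL l) (m.1 l))
      ((∏ l, (1 - aL l)) * Phi A Q * ∏ j, aJ j ^ Q j) := by
  classical
  have hle : ∀ (m : {m : L → J → ℕ // ∀ j, ∑ l, m l j = Q j}) (l : L) (j : J),
      m.1 l j ≤ Q j := fun m l j => by
    rw [← m.2 j]
    exact Finset.single_le_sum (f := fun l => m.1 l j) (fun i _ => Nat.zero_le _)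
      (Finset.mem_univ l)
  haveI : Finite {m : L → J → ℕ // ∀ j, ∑ l, m l j = Q j} := by
    apply Finite.of_injective
      (fun m : {m : L → J → ℕ // ∀ j, ∑ l, m l j = Q j} =>
        (fun l (j : J) => (⟨m.1 l j, Nat.lt_succ_of_le (hle m l j)⟩ : Fin (Q j + 1))))
    intro m m' h
    apply Subtype.ext; funext l j
    exact congrArg Fin.val (congrFun (congrFun h l) j)
  haveI : Fintype {m : L → J → ℕ // ∀ j, ∑ l, m l j = Q j} := Fintype.ofFinite _
  set f : (L → J → ℕ) → ℝ := fun m =>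
    ∏ l, (((∑ j, m l j).factorial : ℝ) / ∏ j, ((m l j).factorial : ℝ)) *
      ∏ j, A l j ^ m l j with hfdef
  -- Phi is the finite sum of f over the subtype
  have hPhi : Phi A Q = ∑ m : {m : L → J → ℕ // ∀ j, ∑ l, m l j = Q j}, f m.1 := by
    have hg : ∀ m : L → J → ℕ,
        (if (∀ l j, A l j = 0 → m l j = 0) ∧ (∀ j, ∑ l, m l j = Q j) then
          ∏ l, (((∑ j, m l j).factorial : ℝ) / ∏ j, ((m l j).factorial : ℝ)) *
            ∏ j, A l j ^ m l j
        else 0) = (if (∀ j, ∑ l, m l j = Q j) then f m else 0) := by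
      intro m
      by_cases h2 : ∀ j, ∑ l, m l j = Q j
      · by_cases h1 : ∀ l j, A l j = 0 → m l j = 0
        · rw [if_pos ⟨h1, h2⟩, if_pos h2]
        · rw [if_neg (fun h => h1 h.1), if_pos h2]
          push_neg at h1
          obtain ⟨l, j, hA0, hm0⟩ := h1
          symm
          simp only [hfdef]
          apply Finset.prod_eq_zero (Finset.mem_univ l)
          rw [mul_eq_zero]; right
          apply Finset.prod_eq_zero (Finset.mem_univ j)
          rw [hA0]
          exact zero_pow hm0
      · rw [if_neg (fun h => h2 h.2), if_neg h2]
    rw [Phi, tsum_congr hg]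
    rw [tsum_eq_sum (s := Finset.univ.image
        (Subtype.val : {m : L → J → ℕ // ∀ j, ∑ l, m l j = Q j} → (L → J → ℕ)))
      (by
        intro m hm
        rw [if_neg]
        intro h2
        exact hm (Finset.mem_image.2 ⟨⟨m, h2⟩, Finset.mem_univ _, rfl⟩))]
    rw [Finset.sum_image (fun x _ y _ h => Subtype.ext h)]
    exact Finset.sum_congr rfl fun m _ => if_pos m.2
  -- algebra for each summand
  have key : ∀ m : {m : L → J → ℕ // ∀ j, ∑ l, m l j = Q j},
      ∏ l, pl (A l) aJ (aL l) (m.1 l)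
        = (∏ l, (1 - aL l)) * f m.1 * ∏ j, aJ j ^ Q j := by
    intro m
    simp only [pl, hfdef]
    have h1 : ∀ l, ∏ j, (A l j * aJ j) ^ m.1 l j
        = (∏ j, A l j ^ m.1 l j) * ∏ j, aJ j ^ m.1 l j := by
      intro l
      rw [← Finset.prod_mul_distrib]
      exact Finset.prod_congr rfl fun j _ => mul_pow _ _ _
    have h2 : ∏ l, ∏ j, aJ j ^ m.1 l j = ∏ j, aJ j ^ Q j := by
      rw [Finset.prod_comm]
      refine Finset.prod_congr rfl fun j _ => ?_
      rw [Finset.prod_pow_eq_pow_sum, m.2 j]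
    calc ∏ l, (1 - aL l) * (((∑ j, m.1 l j).factorial : ℝ) /
            ∏ j, ((m.1 l j).factorial : ℝ)) * ∏ j, (A l j * aJ j) ^ m.1 l j
        = ∏ l, (1 - aL l) * ((((∑ j, m.1 l j).factorial : ℝ) /
            ∏ j, ((m.1 l j).factorial : ℝ)) * ∏ j, A l j ^ m.1 l j) *
            ∏ j, aJ j ^ m.1 l j := by
          refine Finset.prod_congr rfl fun l _ => ?_
          rw [h1 l]; ring
      _ = (∏ l, (1 - aL l)) * (∏ l, (((∑ j, m.1 l j).factorial : ℝ) /
            ∏ j, ((m.1 l j).factorial : ℝ)) * ∏ j, A l j ^ m.1 l j) *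
            ∏ l, ∏ j, aJ j ^ m.1 l j := by
          rw [Finset.prod_mul_distrib, Finset.prod_mul_distrib]
      _ = (∏ l, (1 - aL l)) * (∏ l, (((∑ j, m.1 l j).factorial : ℝ) /
            ∏ j, ((m.1 l j).factorial : ℝ)) * ∏ j, A l j ^ m.1 l j) *
            ∏ j, aJ j ^ Q j := by rw [h2]
  have hsum := hasSum_fintype
    (fun m : {m : L → J → ℕ // ∀ j, ∑ l, m l j = Q j} =>
      ∏ l, pl (A l) aJ (aL l) (m.1 l))
  convert hsum using 1
  rw [hPhi, Finset.mul_sum, Finset.sum_mul]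
  exact Finset.sum_congr rfl fun m _ => (key m).symm
end

section
/- Corollary (conditional route-class distribution): fix Q ∈ ℕ^J such that a_j > 0 whenever Q_j ≥ 1. Then: (i) summing the measure π over all admissible orderings γ for Q gives ∑_γ π(Q, γ) = Φ(Q) · ∏_{j ∈ J} a_j^{Q_j}; and (ii) for every admissible γ, π(Q, γ) / ∑_{γ'} π(Q, γ') = ∏_{j ∈ J} ∏_{k=1}^{Q_j} (a_{γ_j(k)} / a_j). In particular, conditionally on the queue-length vector Q, the route classes of the packets in the queues are independent, a packet at queue j belonging to route r with probability a_r / a_j. -/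
open scoped BigOperators Classical

/-- Positivity of the normalizing constant. -/
lemma Phi_pos {J L : Type*} [Fintype J] [Fintype L]
    (A : L → J → ℝ) (hA : ∀ l j, 0 ≤ A l j) (hcol : ∀ j, ∃ l, 0 < A l j)
    (Q : J → ℕ) : 0 < Phi A Q := by
  classical
  set F : (L → J → ℕ) → ℝ := fun m =>
    if (∀ l j, A l j = 0 → m l j = 0) ∧ (∀ j, ∑ l, m l j = Q j) then
      ∏ l, (((∑ j, m l j).factorial : ℝ) / ∏ j, ((m l j).factorial : ℝ)) *
        ∏ j, A l j ^ m l j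
    else 0 with hF
  have hnonneg : ∀ m, 0 ≤ F m := by
    intro m
    rw [hF]
    dsimp only
    split
    · refine Finset.prod_nonneg fun l _ => mul_nonneg ?_ ?_
      · refine div_nonneg (Nat.cast_nonneg _) (Finset.prod_nonneg fun j _ => Nat.cast_nonneg _)
      · exact Finset.prod_nonneg fun j _ => pow_nonneg (hA l j) _
    · exact le_rfl
  set s : Finset (L → J → ℕ) :=
    Fintype.piFinset fun _ => Fintype.piFinset fun j => Finset.range (Q j + 1) with hs
  have hsupp : ∀ m ∉ s, F m = 0 := by
    intro m hm
    rw [hF]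
    dsimp only
    rw [if_neg]
    rintro ⟨h1, h2⟩
    apply hm
    simp only [hs, Fintype.mem_piFinset, Finset.mem_range, Nat.lt_succ_iff]
    intro l j
    calc m l j ≤ ∑ l', m l' j :=
          Finset.single_le_sum (f := fun l' => m l' j) (fun _ _ => Nat.zero_le _) (Finset.mem_univ l)
      _ = Q j := h2 j
  have hPhi : Phi A Q = ∑ m ∈ s, F m := tsum_eq_sum hsupp
  choose l0 hl0 using hcol
  set m0 : L → J → ℕ := fun l j => if l = l0 j then Q j else 0 with hm0
  have hm0s : m0 ∈ s := by
    simp only [hs, Fintype.mem_piFinset, Finset.mem_range, Nat.lt_succ_iff, hm0]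
    intro l j
    split <;> omega
  have hpos : 0 < F m0 := by
    rw [hF]
    dsimp only
    rw [if_pos]
    · refine Finset.prod_pos fun l _ => mul_pos ?_ ?_
      · refine div_pos (Nat.cast_pos.mpr (Nat.factorial_pos _))
          (Finset.prod_pos fun j _ => Nat.cast_pos.mpr (Nat.factorial_pos _))
      · refine Finset.prod_pos fun j _ => ?_
        rcases eq_or_ne l (l0 j) with h | h
        · exact pow_pos (h ▸ hl0 j) _
        · simp [hm0, h]
    · constructor
      · intro l j hAlj
        rcases eq_or_ne l (l0 j) with h | h
        · exact absurd (h ▸ hAlj) (ne_of_gt (hl0 j))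
        · simp [hm0, h]
      · intro j
        simp [hm0, Finset.sum_ite_eq']
  rw [hPhi]
  exact Finset.sum_pos' (fun m _ => hnonneg m) ⟨m0, hm0s, hpos⟩

/-- Admissible states with queue-length vector `Q` correspond to dependent functions
assigning to each position in each queue a route through that queue. -/
noncomputable def stateEquiv {J R : Type*} (route : R → List J) (Q : J → ℕ) :
    {s : J → List R // (∀ j, (s j).length = Q j) ∧ ∀ j, ∀ r ∈ s j, j ∈ route r} ≃
      ∀ j, Fin (Q j) → {r : R // j ∈ route r} where
  toFun s j i :=
    ⟨(s.1 j).get (Fin.cast (s.2.1 j).symm i),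
      s.2.2 j _ (List.get_mem _ _)⟩
  invFun f :=
    ⟨fun j => List.ofFn fun i => (f j i).1,
      ⟨fun j => List.length_ofFn, fun j r hr => by
        rcases (List.mem_ofFn).mp hr with ⟨i, rfl⟩
        exact (f j i).2⟩⟩
  left_inv s := by
    apply Subtype.ext
    funext j
    refine List.ext_get (by simp [s.2.1 j]) fun n h1 h2 => ?_
    simp [List.get_ofFn]
  right_inv f := by
    funext j i
    apply Subtype.ext
    simp [List.get_ofFn]

private lemma list_prod_map_div {R : Type*} (l : List R) (f : R → ℝ) (c : ℝ) :
    (l.map fun r => f r / c).prod = (l.map f).prod / c ^ l.length := by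
  induction l with
  | nil => simp
  | cons x xs ih =>
      simp only [List.map_cons, List.prod_cons, ih, List.length_cons, pow_succ]
      field_simp

/-- conditional route-class distribution.  A state of the FIFO routed
Store-Forward network with queue-length vector `Q` is encoded as `s : J → List R`, where
`s j` is the list of route classes of the packets in queue `j` (head = front of queue);
admissibility for `Q` means `(s j).length = Q j` and every packet in queue `j` lies on a
route through `j`.  With `π(Q,γ) = Φ(Q) ∏_j ∏_{k=1}^{Q_j} a_{γ_j(k)}`:
(i) `∑_γ π(Q,γ) = Φ(Q) ∏_j a_j^(Q j)`, and
(ii) for every admissible `γ`,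
`π(Q,γ) / ∑_{γ'} π(Q,γ') = ∏_j ∏_{k=1}^{Q_j} (a_{γ_j(k)} / a_j)`. -/
theorem conditional_route_class_distribution
    {J L R : Type*} [Fintype J] [Nonempty J] [Fintype L] [Nonempty L] [Fintype R]
    (A : L → J → ℝ) (hA : ∀ l j, 0 ≤ A l j)
    (hcol : ∀ j, ∃ l, 0 < A l j)
    (route : R → List J) (hnodup : ∀ r, (route r).Nodup)
    (a : R → ℝ) (ha : ∀ r, 0 < a r)
    (aJ : J → ℝ) (haJ : ∀ j, aJ j = ∑ r : R, if j ∈ route r then a r else 0)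
    (aL : L → ℝ) (haL : ∀ l, aL l = ∑ j, A l j * aJ j)
    (hsub : ∀ l, aL l < 1)
    (Q : J → ℕ) (hQ : ∀ j, 1 ≤ Q j → 0 < aJ j) :
    HasSum
      (fun s : {s : J → List R // (∀ j, (s j).length = Q j) ∧ ∀ j, ∀ r ∈ s j, j ∈ route r} =>
        Phi A Q * ∏ j, ((s.1 j).map a).prod)
      (Phi A Q * ∏ j, aJ j ^ Q j) ∧
    ∀ s : {s : J → List R // (∀ j, (s j).length = Q j) ∧ ∀ j, ∀ r ∈ s j, j ∈ route r},
      (Phi A Q * ∏ j, ((s.1 j).map a).prod) /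
          (∑' s' : {s : J → List R //
              (∀ j, (s j).length = Q j) ∧ ∀ j, ∀ r ∈ s j, j ∈ route r},
            Phi A Q * ∏ j, ((s'.1 j).map a).prod)
        = ∏ j, ((s.1 j).map fun r => a r / aJ j).prod := by
  classical
  set S := {s : J → List R // (∀ j, (s j).length = Q j) ∧ ∀ j, ∀ r ∈ s j, j ∈ route r}
    with hS
  set F : S → ℝ := fun s => Phi A Q * ∏ j, ((s.1 j).map a).prod with hFdef
  have haJ' : ∀ j, (∑ x : {r : R // j ∈ route r}, a x.1) = aJ j := by
    intro j
    rw [haJ, ← Finset.sum_filter]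
    exact (Finset.sum_subtype (Finset.filter (fun r => j ∈ route r) Finset.univ)
      (fun r => by simp) a).symm
  set e := stateEquiv route Q with he
  have hcomp : (F ∘ e.symm) =
      fun f : ∀ j, Fin (Q j) → {r : R // j ∈ route r} =>
        Phi A Q * ∏ j, ∏ i : Fin (Q j), a (f j i).1 := by
    funext f
    simp only [Function.comp_apply, hFdef, he, stateEquiv, Equiv.coe_fn_symm_mk]
    congr 1
    refine Finset.prod_congr rfl fun j _ => ?_
    rw [List.map_ofFn, List.prod_ofFn]
    rfl
  have hsum : ∑ f : ∀ j, Fin (Q j) → {r : R // j ∈ route r},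
      (Phi A Q * ∏ j, ∏ i : Fin (Q j), a (f j i).1) = Phi A Q * ∏ j, aJ j ^ Q j := by
    rw [← Finset.mul_sum]
    congr 1
    have h1 : ∀ j : J, (∑ v : Fin (Q j) → {r : R // j ∈ route r},
        ∏ i : Fin (Q j), a (v i).1) = aJ j ^ Q j := by
      intro j
      have := (Finset.prod_univ_sum (fun _ : Fin (Q j) => (Finset.univ : Finset {r : R // j ∈ route r}))
        (fun _ x => a x.1)).symm
      rw [Fintype.piFinset_univ] at this
      rw [this, Finset.prod_const, haJ' j, Finset.card_univ, Fintype.card_fin]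
    have h2 := (Finset.prod_univ_sum
      (fun j : J => (Finset.univ : Finset (Fin (Q j) → {r : R // j ∈ route r})))
      (fun j v => ∏ i : Fin (Q j), a (v i).1)).symm
    rw [Fintype.piFinset_univ] at h2
    rw [h2]
    exact Finset.prod_congr rfl fun j _ => h1 j
  have hHasSum : HasSum F (Phi A Q * ∏ j, aJ j ^ Q j) := by
    rw [← Equiv.hasSum_iff e.symm, hcomp]
    have := hasSum_fintype (fun f : ∀ j, Fin (Q j) → {r : R // j ∈ route r} =>
      Phi A Q * ∏ j, ∏ i : Fin (Q j), a (f j i).1)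
    rwa [hsum] at this
  refine ⟨hHasSum, fun s => ?_⟩
  have htsum : (∑' s' : S, F s') = Phi A Q * ∏ j, aJ j ^ Q j := hHasSum.tsum_eq
  have hPhi := Phi_pos A hA hcol Q
  have hprod_pos : 0 < ∏ j, aJ j ^ Q j := by
    refine Finset.prod_pos fun j _ => ?_
    rcases Nat.eq_zero_or_pos (Q j) with h | h
    · simp [h]
    · exact pow_pos (hQ j h) _
  have hrhs : ∀ j : J, ((s.1 j).map fun r => a r / aJ j).prod =
      ((s.1 j).map a).prod / aJ j ^ Q j := by
    intro j
    rw [list_prod_map_div, s.2.1 j]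
  show F s / (∑' s' : S, F s') = _
  rw [htsum, hFdef]
  simp only
  rw [Finset.prod_congr rfl fun j _ => hrhs j, Finset.prod_div_distrib,
    mul_div_mul_left _ _ (ne_of_gt hPhi)]
end
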